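/- Exchangeability identity for softmax resampling: if x^(1),…,x^(M) are i.i.d. from density q and an index ζ is drawn from the categorical distribution with probabilities w(x^(m))/Σ_j w(x^(j)) for a positive measurable weight function w, then the density of the selected sample x^(ζ) is p_M(x) = M·q(x)·E[w(x)/(w(x) + Σ_{j=2}^M w(x^(j)))], and for any bounded g, E[g(x^(ζ))] → E_π[g] as M → ∞ where π ∝ w·q, provided w is bounded above and below by positive constants. -/

import Mathlib

open MeasureTheory Filter

section SRAux

variable {X : Type*} [MeasurableSpace X] {Q : Measure X} [IsProbabilityMeasure Q]

lemma sr_integrable_of_bdd {α : Type*} [MeasurableSpace α] {μ : Measure α} [IsFiniteMeasure μ]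
    {f : α → ℝ} (hf : Measurable f) {K : ℝ} (h : ∀ x, |f x| ≤ K) : Integrable f μ :=
  (integrable_const K).mono' hf.aestronglyMeasurable
    (Filter.Eventually.of_forall fun x => by simpa [Real.norm_eq_abs] using h x)

lemma sr_map_eval {M : ℕ} (i : Fin M) :
    Measure.map (fun xs : Fin M → X => xs i) (Measure.pi fun _ => Q) = Q := by
  ext s hs
  rw [Measure.map_apply (measurable_pi_apply i) hs]
  have hp : (fun xs : Fin M → X => xs i) ⁻¹' s
      = Set.pi Set.univ (fun k => if k = i then s else Set.univ) := by
    ext xs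
    simp only [Set.mem_preimage, Set.mem_pi, Set.mem_univ, true_implies]
    constructor
    · intro h k
      by_cases hk : k = i
      · subst hk; simpa using h
      · simp [hk]
    · intro h
      simpa using h i
  rw [hp, Measure.pi_pi]
  simp [apply_ite Q]

lemma sr_map_eval_pair {M : ℕ} {i j : Fin M} (hij : i ≠ j) :
    Measure.map (fun xs : Fin M → X => (xs i, xs j)) (Measure.pi fun _ => Q) = Q.prod Q := by
  refine (Measure.prod_eq fun s t hs ht => ?_).symm
  rw [Measure.map_apply ((measurable_pi_apply i).prodMk (measurable_pi_apply j)) (hs.prod ht)]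
  have hp : (fun xs : Fin M → X => (xs i, xs j)) ⁻¹' (s ×ˢ t)
      = Set.pi Set.univ (fun k => if k = i then s else if k = j then t else Set.univ) := by
    ext xs
    simp only [Set.mem_preimage, Set.mem_prod, Set.mem_pi, Set.mem_univ, true_implies]
    constructor
    · rintro ⟨h1, h2⟩ k
      by_cases hk : k = i
      · subst hk; simpa using h1
      · by_cases hk' : k = j
        · subst hk'; simp [hk, h2]
        · simp [hk, hk']
    · intro h
      refine ⟨by simpa using h i, ?_⟩
      have hj := h j
      simp only [if_neg hij.symm, if_pos rfl] at hj
      exact hj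
  rw [hp, Measure.pi_pi]
  rw [← Finset.prod_mul_prod_compl ({i, j} : Finset (Fin M))]
  have h1 : ∏ k ∈ ({i, j} : Finset (Fin M)),
      Q (if k = i then s else if k = j then t else Set.univ) = Q s * Q t := by
    rw [Finset.prod_pair hij]
    simp [hij.symm]
  have h2 : ∏ k ∈ (({i, j} : Finset (Fin M))ᶜ),
      Q (if k = i then s else if k = j then t else Set.univ) = 1 := by
    refine Finset.prod_eq_one fun k hk => ?_
    simp only [Finset.mem_compl, Finset.mem_insert, Finset.mem_singleton] at hk
    push_neg at hk
    simp [hk.1, hk.2]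
  rw [h1, h2, mul_one]

lemma sr_integral_eval {M : ℕ} (i : Fin M) (f : X → ℝ) (hf : Measurable f) :
    ∫ xs : Fin M → X, f (xs i) ∂(Measure.pi fun _ => Q) = ∫ x, f x ∂Q := by
  conv_rhs => rw [← sr_map_eval (Q := Q) i]
  rw [integral_map (measurable_pi_apply i).aemeasurable hf.aestronglyMeasurable]

lemma sr_integral_eval_pair {M : ℕ} {i j : Fin M} (hij : i ≠ j) (f h : X → ℝ)
    (hf : Measurable f) (hh : Measurable h) :
    ∫ xs : Fin M → X, f (xs i) * h (xs j) ∂(Measure.pi fun _ => Q)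
      = (∫ x, f x ∂Q) * ∫ x, h x ∂Q := by
  rw [← integral_prod_mul, ← sr_map_eval_pair (Q := Q) hij,
    integral_map ((measurable_pi_apply i).prodMk (measurable_pi_apply j)).aemeasurable
      ((hf.comp measurable_fst).mul (hh.comp measurable_snd)).aestronglyMeasurable]

lemma sr_part1 (w : X → ℝ) (hw : Measurable w) (c : ℝ) (hc : 0 < c)
    (hwc : ∀ x, c ≤ w x) (g : X → ℝ) (hg : Measurable g) (B : ℝ) (hgB : ∀ x, |g x| ≤ B)
    (M : ℕ) (hM : 0 < M) :
    (∫ xs : Fin M → X, ∑ m, (w (xs m) / ∑ j, w (xs j)) * g (xs m)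
        ∂(Measure.pi fun _ => Q)) =
      ∫ x, g x *
        ((M : ℝ) *
          ∫ ys : Fin (M - 1) → X, w x / (w x + ∑ j, w (ys j))
            ∂(Measure.pi fun _ => Q)) ∂Q := by
  obtain ⟨n, rfl⟩ : ∃ n, M = n + 1 := ⟨M - 1, (Nat.succ_pred_eq_of_pos hM).symm⟩
  show _ = ∫ x, g x * ((((n + 1 : ℕ) : ℝ)) * ∫ ys : Fin n → X, w x / (w x + ∑ j, w (ys j)) ∂(Measure.pi fun _ => Q)) ∂Q
  have hw0 : ∀ x, 0 < w x := fun x => hc.trans_le (hwc x)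
  have hSm : ∀ N : ℕ, Measurable fun xs : Fin N → X => ∑ j, w (xs j) := fun N =>
    Finset.measurable_sum _ fun j _ => hw.comp (measurable_pi_apply j)
  have hSpos : ∀ xs : Fin (n + 1) → X, 0 < ∑ j, w (xs j) := fun xs =>
    Finset.sum_pos (fun j _ => hw0 _) Finset.univ_nonempty
  have hterm_bdd : ∀ (xs : Fin (n + 1) → X) (m : Fin (n + 1)),
      |(w (xs m) / ∑ j, w (xs j)) * g (xs m)| ≤ B := by
    intro xs m
    have h1 := hSpos xs
    have h2 : w (xs m) ≤ ∑ j, w (xs j) :=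
      Finset.single_le_sum (fun j _ => (hw0 (xs j)).le) (Finset.mem_univ m)
    rw [abs_mul]
    have h3 : |w (xs m) / ∑ j, w (xs j)| ≤ 1 := by
      rw [abs_of_nonneg (div_nonneg (hw0 _).le h1.le)]
      exact div_le_one_of_le₀ h2 h1.le
    calc |w (xs m) / ∑ j, w (xs j)| * |g (xs m)| ≤ 1 * |g (xs m)| :=
          mul_le_mul_of_nonneg_right h3 (abs_nonneg _)
      _ = |g (xs m)| := one_mul _
      _ ≤ B := hgB _
  have hint1 : ∀ m : Fin (n + 1), Integrable
      (fun xs : Fin (n + 1) → X => (w (xs m) / ∑ j, w (xs j)) * g (xs m))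
      (Measure.pi fun _ => Q) := fun m => sr_integrable_of_bdd
    (((hw.comp (measurable_pi_apply m)).div (hSm _)).mul (hg.comp (measurable_pi_apply m)))
    (fun xs => hterm_bdd xs m)
  rw [integral_finset_sum _ (fun m _ => hint1 m)]
  have hint : Integrable
      (fun p : X × (Fin n → X) => (w p.1 / (w p.1 + ∑ j, w (p.2 j))) * g p.1)
      (Q.prod (Measure.pi fun _ => Q)) := by
    refine sr_integrable_of_bdd
      (((hw.comp measurable_fst).div
        ((hw.comp measurable_fst).add ((hSm n).comp measurable_snd))).mul
        (hg.comp measurable_fst)) (K := B) fun p => ?_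
    have hs0 : 0 ≤ ∑ j, w (p.2 j) := Finset.sum_nonneg fun j _ => (hw0 _).le
    have h1 : 0 < w p.1 + ∑ j, w (p.2 j) :=
      (hw0 p.1).trans_le (le_add_of_nonneg_right hs0)
    rw [abs_mul]
    have h3 : |w p.1 / (w p.1 + ∑ j, w (p.2 j))| ≤ 1 := by
      rw [abs_of_nonneg (div_nonneg (hw0 _).le h1.le)]
      exact div_le_one_of_le₀ (le_add_of_nonneg_right hs0) h1.le
    calc |w p.1 / (w p.1 + ∑ j, w (p.2 j))| * |g p.1| ≤ 1 * |g p.1| :=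
          mul_le_mul_of_nonneg_right h3 (abs_nonneg _)
      _ = |g p.1| := one_mul _
      _ ≤ B := hgB _
  have hterm : ∀ m : Fin (n + 1),
      (∫ xs : Fin (n + 1) → X, (w (xs m) / ∑ j, w (xs j)) * g (xs m)
        ∂(Measure.pi fun _ => Q))
      = ∫ x, g x * ∫ ys : Fin n → X, w x / (w x + ∑ j, w (ys j))
          ∂(Measure.pi fun _ => Q) ∂Q := by
    intro m
    have key : (∫ xs : Fin (n + 1) → X, (w (xs m) / ∑ j, w (xs j)) * g (xs m)
          ∂(Measure.pi fun _ => Q))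
        = ∫ p : X × (Fin n → X), (w p.1 / (w p.1 + ∑ j, w (p.2 j))) * g p.1
            ∂(Q.prod (Measure.pi fun _ => Q)) := by
      rw [← ((measurePreserving_piFinSuccAbove (fun _ : Fin (n + 1) => Q) m).symm
        _).integral_comp (MeasurableEquiv.measurableEmbedding _) _]
      refine integral_congr_ae (Filter.Eventually.of_forall fun p => ?_)
      have h1 : ((MeasurableEquiv.piFinSuccAbove (fun _ : Fin (n + 1) => X) m).symm p)
          = m.insertNth p.1 p.2 := rfl
      simp only [h1, Fin.insertNth_apply_same]
      congr 2
      rw [Fin.sum_univ_succAbove _ m]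
      simp [Fin.insertNth_apply_same, Fin.insertNth_apply_succAbove]
    rw [key, integral_prod _ hint]
    refine integral_congr_ae (Filter.Eventually.of_forall fun x => ?_)
    dsimp only
    rw [← integral_const_mul]
    exact integral_congr_ae (Filter.Eventually.of_forall fun ys => mul_comm _ _)
  rw [Finset.sum_congr rfl fun m _ => hterm m, Finset.sum_const, Finset.card_univ,
    Fintype.card_fin, nsmul_eq_mul, ← integral_const_mul]
  refine integral_congr_ae (Filter.Eventually.of_forall fun x => ?_)
  push_cast
  ring

set_option maxHeartbeats 1000000 in
lemma sr_part2 (w : X → ℝ) (hw : Measurable w) (c C : ℝ) (hc : 0 < c)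
    (hwc : ∀ x, c ≤ w x) (hwC : ∀ x, w x ≤ C)
    (g : X → ℝ) (hg : Measurable g) (B : ℝ) (hgB : ∀ x, |g x| ≤ B) :
    Tendsto
      (fun M : ℕ =>
        ∫ xs : Fin M → X, ∑ m, (w (xs m) / ∑ j, w (xs j)) * g (xs m)
          ∂(Measure.pi fun _ => Q))
      atTop (nhds ((∫ x, w x * g x ∂Q) / (∫ x, w x ∂Q))) := by
  have hX : Nonempty X := by
    by_contra h
    rw [not_nonempty_iff] at h
    have h1 : Q Set.univ = 1 := measure_univ
    rw [Set.univ_eq_empty_iff.mpr h, measure_empty] at h1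
    exact zero_ne_one h1
  obtain ⟨x₀⟩ := hX
  have hw0 : ∀ x, 0 < w x := fun x => hc.trans_le (hwc x)
  have hC : 0 < C := (hw0 x₀).trans_le (hwC x₀)
  have hB : 0 ≤ B := (abs_nonneg _).trans (hgB x₀)
  have hw_int : Integrable w Q :=
    sr_integrable_of_bdd hw (K := C) fun x => by
      rw [abs_of_pos (hw0 x)]; exact hwC x
  have hwg_int : Integrable (fun x => w x * g x) Q :=
    sr_integrable_of_bdd (hw.mul hg) (K := C * B) fun x => by
      rw [abs_mul, abs_of_pos (hw0 x)]
      exact mul_le_mul (hwC x) (hgB x) (abs_nonneg _) hC.le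
  set a := ∫ x, w x * g x ∂Q with ha
  set b := ∫ x, w x ∂Q with hb
  have hbc : c ≤ b := by
    have h := integral_mono (integrable_const c) hw_int hwc
    simpa using h
  have hbpos : 0 < b := hc.trans_le hbc
  set Y := fun x => b * (w x * g x) - a * w x with hY
  have hYm : Measurable Y := (measurable_const.mul (hw.mul hg)).sub (measurable_const.mul hw)
  set K := b * (C * B) + |a| * C with hK
  have hYb : ∀ x, |Y x| ≤ K := by
    intro x
    calc |Y x| ≤ |b * (w x * g x)| + |a * w x| := abs_sub _ _
      _ ≤ b * (C * B) + |a| * C := by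
          rw [abs_mul, abs_mul, abs_of_pos hbpos, abs_mul, abs_of_pos (hw0 x)]
          gcongr
          · exact hwC x
          · exact hgB x
          · exact hwC x
      _ = K := rfl
  have hK0 : 0 ≤ K := le_trans (abs_nonneg _) (hYb x₀)
  have hYint : Integrable Y Q := sr_integrable_of_bdd hYm hYb
  have hY0 : ∫ x, Y x ∂Q = 0 := by
    simp only [hY]
    rw [integral_sub (hwg_int.const_mul b) (hw_int.const_mul a), integral_const_mul,
      integral_const_mul, ← ha, ← hb]
    ring
  -- second moment bound
  have hYi_int : ∀ (M : ℕ) (i j : Fin M), Integrable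
      (fun xs : Fin M → X => Y (xs i) * Y (xs j)) (Measure.pi fun _ => Q) := fun M i j =>
    sr_integrable_of_bdd ((hYm.comp (measurable_pi_apply i)).mul (hYm.comp (measurable_pi_apply j)))
      (K := K * K) fun xs => by
        rw [abs_mul]; exact mul_le_mul (hYb _) (hYb _) (abs_nonneg _) hK0
  have hYsq : ∫ x, Y x * Y x ∂Q ≤ K ^ 2 := by
    have hint : Integrable (fun x => Y x * Y x) Q :=
      sr_integrable_of_bdd (hYm.mul hYm) (K := K * K) fun x => by
        rw [abs_mul]; exact mul_le_mul (hYb _) (hYb _) (abs_nonneg _) hK0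
    have h := integral_mono hint (integrable_const (K ^ 2)) (fun x => by
      calc Y x * Y x ≤ |Y x * Y x| := le_abs_self _
        _ = |Y x| * |Y x| := abs_mul _ _
        _ ≤ K * K := mul_le_mul (hYb _) (hYb _) (abs_nonneg _) hK0
        _ = K ^ 2 := (sq K).symm)
    simpa using h
  have hsum_sq : ∀ M : ℕ,
      (∫ xs : Fin M → X, (∑ m, Y (xs m)) * (∑ m, Y (xs m)) ∂(Measure.pi fun _ => Q))
        ≤ M * K ^ 2 := by
    intro M
    have hexp : (fun xs : Fin M → X => (∑ m, Y (xs m)) * (∑ m, Y (xs m)))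
        = fun xs => ∑ i, ∑ j, Y (xs i) * Y (xs j) := by
      funext xs; rw [Finset.sum_mul_sum]
    rw [hexp, integral_finset_sum _ (fun i _ =>
      integrable_finset_sum _ (fun j _ => hYi_int M i j))]
    have hrow : ∀ i : Fin M,
        (∫ xs : Fin M → X, ∑ j, Y (xs i) * Y (xs j) ∂(Measure.pi fun _ => Q))
          = ∫ x, Y x * Y x ∂Q := by
      intro i
      rw [integral_finset_sum _ (fun j _ => hYi_int M i j)]
      rw [Finset.sum_eq_single i
        (fun j _ hji => by
          rw [sr_integral_eval_pair (Ne.symm hji) Y Y hYm hYm, hY0, zero_mul])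
        (fun h => absurd (Finset.mem_univ i) h)]
      exact sr_integral_eval i (fun x => Y x * Y x) (hYm.mul hYm)
    rw [Finset.sum_congr rfl fun i _ => hrow i, Finset.sum_const, Finset.card_univ,
      Fintype.card_fin, nsmul_eq_mul]
    exact mul_le_mul_of_nonneg_left hYsq (Nat.cast_nonneg M)
  -- Cauchy–Schwarz
  have hCS : ∀ M : ℕ,
      (∫ xs : Fin M → X, |∑ m, Y (xs m)| ∂(Measure.pi fun _ => Q))
        ≤ Real.sqrt M * K := by
    intro M
    have hZm : Measurable fun xs : Fin M → X => ∑ m, Y (xs m) :=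
      Finset.measurable_sum _ fun m _ => hYm.comp (measurable_pi_apply m)
    have hZb : ∀ xs : Fin M → X, |∑ m, Y (xs m)| ≤ M * K := fun xs =>
      (Finset.abs_sum_le_sum_abs _ _).trans
        (by
          calc ∑ m, |Y (xs m)| ≤ ∑ _m : Fin M, K := Finset.sum_le_sum fun m _ => hYb _
            _ = M * K := by simp [mul_comm])
    have h2 : MemLp (fun xs : Fin M → X => |∑ m, Y (xs m)|) (ENNReal.ofReal 2)
        (Measure.pi fun _ : Fin M => Q) :=
      (memLp_top_of_bound hZm.abs.aestronglyMeasurable (M * K)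
        (Filter.Eventually.of_forall fun xs => by
          simpa [Real.norm_eq_abs, abs_abs] using hZb xs)).mono_exponent le_top
    have h1 : MemLp (fun _ : Fin M → X => (1 : ℝ)) (ENNReal.ofReal 2)
        (Measure.pi fun _ : Fin M => Q) := memLp_const 1
    have hconj : Real.HolderConjugate 2 2 := Real.HolderConjugate.two_two
    have hH := integral_mul_le_Lp_mul_Lq_of_nonneg hconj
      (Filter.Eventually.of_forall fun xs => abs_nonneg _)
      (Filter.Eventually.of_forall fun _ => zero_le_one) h2 h1
    simp only [mul_one, Real.one_rpow, integral_const, measure_univ, ENNReal.toReal_one,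
      one_smul, probReal_univ] at hH
    have hpow : ∀ t : ℝ, |t| ^ (2 : ℝ) = t * t := fun t => by
      rw [show (2 : ℝ) = ((2 : ℕ) : ℝ) by norm_num, Real.rpow_natCast, sq_abs, sq]
    calc (∫ xs : Fin M → X, |∑ m, Y (xs m)| ∂(Measure.pi fun _ => Q))
        ≤ (∫ xs : Fin M → X, |∑ m, Y (xs m)| ^ (2 : ℝ) ∂(Measure.pi fun _ => Q))
            ^ (1 / 2 : ℝ) := hH
      _ = (∫ xs : Fin M → X, (∑ m, Y (xs m)) * (∑ m, Y (xs m))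
            ∂(Measure.pi fun _ => Q)) ^ (1 / 2 : ℝ) := by
          congr 1
          exact integral_congr_ae (Filter.Eventually.of_forall fun xs => hpow _)
      _ = Real.sqrt (∫ xs : Fin M → X, (∑ m, Y (xs m)) * (∑ m, Y (xs m))
            ∂(Measure.pi fun _ => Q)) := (Real.sqrt_eq_rpow _).symm
      _ ≤ Real.sqrt ((M : ℝ) * K ^ 2) := Real.sqrt_le_sqrt (hsum_sq M)
      _ = Real.sqrt M * K := by
          rw [Real.sqrt_mul (Nat.cast_nonneg M), Real.sqrt_sq hK0]
  -- main estimate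
  have hest : ∀ M : ℕ, 0 < M →
      |(∫ xs : Fin M → X, ∑ m, (w (xs m) / ∑ j, w (xs j)) * g (xs m)
          ∂(Measure.pi fun _ => Q)) - a / b|
        ≤ (K / (b * c)) * (Real.sqrt M)⁻¹ := by
    intro M hM
    have hMpos : (0 : ℝ) < M := by exact_mod_cast hM
    have hSm : Measurable fun xs : Fin M → X => ∑ j, w (xs j) :=
      Finset.measurable_sum _ fun j _ => hw.comp (measurable_pi_apply j)
    have hSlb : ∀ xs : Fin M → X, (M : ℝ) * c ≤ ∑ j, w (xs j) := by
      intro xs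
      calc (M : ℝ) * c = ∑ _j : Fin M, c := by simp [mul_comm]
        _ ≤ ∑ j, w (xs j) := Finset.sum_le_sum fun j _ => hwc _
    have hSpos : ∀ xs : Fin M → X, 0 < ∑ j, w (xs j) := fun xs =>
      lt_of_lt_of_le (by positivity) (hSlb xs)
    have hZm : Measurable fun xs : Fin M → X => ∑ m, Y (xs m) :=
      Finset.measurable_sum _ fun m _ => hYm.comp (measurable_pi_apply m)
    have hZb : ∀ xs : Fin M → X, |∑ m, Y (xs m)| ≤ M * K := fun xs =>
      (Finset.abs_sum_le_sum_abs _ _).trans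
        (by
          calc ∑ m, |Y (xs m)| ≤ ∑ _m : Fin M, K := Finset.sum_le_sum fun m _ => hYb _
            _ = M * K := by simp [mul_comm])
    have hterm_bdd : ∀ (xs : Fin M → X) (m : Fin M),
        |(w (xs m) / ∑ j, w (xs j)) * g (xs m)| ≤ B := by
      intro xs m
      have h1 := hSpos xs
      have h2 : w (xs m) ≤ ∑ j, w (xs j) :=
        Finset.single_le_sum (fun j _ => (hw0 (xs j)).le) (Finset.mem_univ m)
      rw [abs_mul]
      have h3 : |w (xs m) / ∑ j, w (xs j)| ≤ 1 := by
        rw [abs_of_nonneg (div_nonneg (hw0 _).le h1.le)]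
        exact div_le_one_of_le₀ h2 h1.le
      calc |w (xs m) / ∑ j, w (xs j)| * |g (xs m)| ≤ 1 * |g (xs m)| :=
            mul_le_mul_of_nonneg_right h3 (abs_nonneg _)
        _ = |g (xs m)| := one_mul _
        _ ≤ B := hgB _
    have hf_meas : Measurable fun xs : Fin M → X =>
        ∑ m, (w (xs m) / ∑ j, w (xs j)) * g (xs m) :=
      Finset.measurable_sum _ fun m _ =>
        ((hw.comp (measurable_pi_apply m)).div hSm).mul (hg.comp (measurable_pi_apply m))
    have hf_int : Integrable (fun xs : Fin M → X =>
        ∑ m, (w (xs m) / ∑ j, w (xs j)) * g (xs m)) (Measure.pi fun _ => Q) :=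
      sr_integrable_of_bdd hf_meas (K := M * B) fun xs =>
        (Finset.abs_sum_le_sum_abs _ _).trans
          (by
            calc ∑ m, |(w (xs m) / ∑ j, w (xs j)) * g (xs m)| ≤ ∑ _m : Fin M, B :=
                Finset.sum_le_sum fun m _ => hterm_bdd xs m
              _ = M * B := by simp [mul_comm])
    -- pointwise identity
    have hptw : ∀ xs : Fin M → X,
        (∑ m, (w (xs m) / ∑ j, w (xs j)) * g (xs m)) - a / b
          = (∑ m, Y (xs m)) / (b * ∑ j, w (xs j)) := by
      intro xs
      have hS' : (∑ j, w (xs j)) ≠ 0 := (hSpos xs).ne'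
      simp only [hY]
      simp_rw [div_mul_eq_mul_div]
      rw [← Finset.sum_div, Finset.sum_sub_distrib, ← Finset.mul_sum, ← Finset.mul_sum]
      field_simp
    have hdiff : (∫ xs : Fin M → X, ∑ m, (w (xs m) / ∑ j, w (xs j)) * g (xs m)
          ∂(Measure.pi fun _ => Q)) - a / b
        = ∫ xs : Fin M → X, (∑ m, Y (xs m)) / (b * ∑ j, w (xs j))
            ∂(Measure.pi fun _ => Q) := by
      rw [show (a / b : ℝ)
          = ∫ _xs : Fin M → X, (a / b : ℝ) ∂(Measure.pi fun _ => Q) by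
            simp [measure_univ]]
      rw [← integral_sub hf_int (integrable_const _)]
      exact integral_congr_ae (Filter.Eventually.of_forall fun xs => hptw xs)
    rw [hdiff]
    have hq_int : Integrable (fun xs : Fin M → X =>
        (∑ m, Y (xs m)) / (b * ∑ j, w (xs j))) (Measure.pi fun _ => Q) := by
      refine sr_integrable_of_bdd (hZm.div (measurable_const.mul hSm))
        (K := (M * K) / (b * (M * c))) fun xs => ?_
      have hd : 0 < b * ∑ j, w (xs j) := mul_pos hbpos (hSpos xs)
      rw [abs_div, abs_of_pos hd]
      have hd2 : 0 < b * ((M : ℝ) * c) := by positivity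
      exact div_le_div₀ (by positivity) (hZb xs) hd2
        (mul_le_mul_of_nonneg_left (hSlb xs) hbpos.le)
    calc |∫ xs : Fin M → X, (∑ m, Y (xs m)) / (b * ∑ j, w (xs j))
          ∂(Measure.pi fun _ => Q)|
        ≤ ∫ xs : Fin M → X, |(∑ m, Y (xs m)) / (b * ∑ j, w (xs j))|
            ∂(Measure.pi fun _ => Q) := by
          exact norm_integral_le_integral_norm
            (fun xs : Fin M → X => (∑ m, Y (xs m)) / (b * ∑ j, w (xs j)))
      _ ≤ ∫ xs : Fin M → X, |∑ m, Y (xs m)| / (b * ((M : ℝ) * c))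
            ∂(Measure.pi fun _ => Q) := by
          refine integral_mono hq_int.abs ?_ fun xs => ?_
          · exact (sr_integrable_of_bdd hZm hZb).abs.div_const _
          · have hd : 0 < b * ∑ j, w (xs j) := mul_pos hbpos (hSpos xs)
            have hd2 : 0 < b * ((M : ℝ) * c) := mul_pos hbpos (mul_pos hMpos hc)
            rw [abs_div, abs_of_pos hd]
            exact div_le_div_of_nonneg_left (abs_nonneg _) hd2
              (mul_le_mul_of_nonneg_left (hSlb xs) hbpos.le)
      _ = (∫ xs : Fin M → X, |∑ m, Y (xs m)| ∂(Measure.pi fun _ => Q))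
            / (b * ((M : ℝ) * c)) := by
          rw [integral_div]
      _ ≤ (Real.sqrt M * K) / (b * ((M : ℝ) * c)) := by
          have hd2 : 0 < b * ((M : ℝ) * c) := mul_pos hbpos (mul_pos hMpos hc)
          gcongr
          exact hCS M
      _ = (K / (b * c)) * (Real.sqrt M)⁻¹ := by
          have hss : Real.sqrt M * Real.sqrt M = (M : ℝ) :=
            Real.mul_self_sqrt hMpos.le
          have hs0 : (0 : ℝ) < Real.sqrt M := Real.sqrt_pos.mpr hMpos
          rw [← hss]
          field_simp
          ring_nf
          rw [Real.sq_sqrt hMpos.le]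
          rw [Real.sq_sqrt hMpos.le]
  -- conclude
  rw [← tendsto_sub_nhds_zero_iff]
  apply squeeze_zero_norm' (a := fun M : ℕ => (K / (b * c)) * (Real.sqrt M)⁻¹)
  · filter_upwards [eventually_gt_atTop 0] with M hM
    simpa [Real.norm_eq_abs] using hest M hM
  · have hsqrt : Tendsto Real.sqrt atTop atTop := by
      rw [show Real.sqrt = fun x : ℝ => x ^ (1 / 2 : ℝ) from funext Real.sqrt_eq_rpow]
      exact tendsto_rpow_atTop (by norm_num)
    have h1 : Tendsto (fun M : ℕ => Real.sqrt M) atTop atTop :=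
      hsqrt.comp tendsto_natCast_atTop_atTop
    have h2 : Tendsto (fun M : ℕ => (Real.sqrt M)⁻¹) atTop (nhds 0) :=
      h1.inv_tendsto_atTop
    have h3 := h2.const_mul (K / (b * c))
    simpa using h3


end SRAux

/-- Exchangeability identity for softmax resampling: if `x⁽¹⁾,…,x⁽ᴹ⁾` are i.i.d.
from `Q` and an index `ζ` is drawn from the categorical distribution with
probabilities `w(x⁽ᵐ⁾)/Σ_j w(x⁽ʲ⁾)` for a weight function `w` bounded between
positive constants, then the law of the selected sample `x⁽ᶻ⁾` has density
`M·E[w(x)/(w(x)+Σ_{j=2}^M w(x⁽ʲ⁾))]` with respect to `Q` (expressed via test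
functions `g`), and `E[g(x⁽ᶻ⁾)] → E_π[g]` as `M → ∞`, where `π ∝ w·Q`. -/
theorem softmax_resampling_density_and_limit
    {X : Type*} [MeasurableSpace X] (Q : Measure X) [IsProbabilityMeasure Q]
    (w : X → ℝ) (hw : Measurable w) (c C : ℝ) (hc : 0 < c)
    (hwc : ∀ x, c ≤ w x) (hwC : ∀ x, w x ≤ C)
    (g : X → ℝ) (hg : Measurable g) (B : ℝ) (hgB : ∀ x, |g x| ≤ B) :
    (∀ M : ℕ, 0 < M →
      (∫ xs : Fin M → X, ∑ m, (w (xs m) / ∑ j, w (xs j)) * g (xs m)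
          ∂(Measure.pi fun _ => Q)) =
        ∫ x, g x *
          ((M : ℝ) *
            ∫ ys : Fin (M - 1) → X, w x / (w x + ∑ j, w (ys j))
              ∂(Measure.pi fun _ => Q)) ∂Q) ∧
    Tendsto
      (fun M : ℕ =>
        ∫ xs : Fin M → X, ∑ m, (w (xs m) / ∑ j, w (xs j)) * g (xs m)
          ∂(Measure.pi fun _ => Q))
      atTop (nhds ((∫ x, w x * g x ∂Q) / (∫ x, w x ∂Q))) :=
  ⟨fun M hM => sr_part1 w hw c hc hwc g hg B hgB M hM,
   sr_part2 w hw c C hc hwc hwC g hg B hgB⟩
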